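/- Let G and H be graphs, I_G a maximal independent set of G, I_H a maximal independent set of H, G' the subgraph of G induced by V(G)∖I_G, and H' the subgraph of H induced by V(H)∖I_H. Then Γ(G □ H) ≥ |I_G|·|I_H| + Γ(G' □ H'). -/

import Mathlib

open SimpleGraph

variable {V : Type*} {W : Type*}

/-- `D` is a dominating set of `G`: every vertex outside `D` has a neighbor in `D`. -/
def IsDomSet (G : SimpleGraph V) (D : Set V) : Prop :=
  ∀ v ∉ D, ∃ u ∈ D, G.Adj u v

/-- `D` is a minimal dominating set: dominating, and no proper subset is dominating. -/
def IsMinDomSet (G : SimpleGraph V) (D : Set V) : Prop :=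
  IsDomSet G D ∧ ∀ D' ⊂ D, ¬ IsDomSet G D'

/-- The upper domination number `Γ(G)`: maximum size of a minimal dominating set. -/
noncomputable def upperDom (G : SimpleGraph V) : ℕ :=
  sSup {n | ∃ D : Set V, IsMinDomSet G D ∧ D.ncard = n}

/-- The domination number `γ(G)`: minimum size of a dominating set. -/
noncomputable def domNum (G : SimpleGraph V) : ℕ :=
  sInf {n | ∃ D : Set V, IsDomSet G D ∧ D.ncard = n}

/-- The set of vertices of `D` having a private `D`-neighbor. -/
def privSet (G : SimpleGraph V) (D : Set V) : Set V :=
  {v ∈ D | ∃ u, u ∉ D ∧ G.Adj v u ∧ ∀ w ∈ D, G.Adj w u → w = v}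

/-- `I` is an independent set of `G`. -/
def IsIndep (G : SimpleGraph V) (I : Set V) : Prop :=
  ∀ u ∈ I, ∀ v ∈ I, ¬ G.Adj u v

/-- `I` is a maximal independent set of `G`. -/
def IsMaxIndep (G : SimpleGraph V) (I : Set V) : Prop :=
  IsIndep G I ∧ ∀ J, IsIndep G J → I ⊆ J → J = I

/-- The independence number `α(G)`. -/
noncomputable def indepNum (G : SimpleGraph V) : ℕ :=
  sSup {n | ∃ I : Set V, IsIndep G I ∧ I.ncard = n}

/-- The star `K_{1,n}` on `Fin (n+1)` with center `0`. -/
def starGraph (n : ℕ) : SimpleGraph (Fin (n + 1)) :=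
  SimpleGraph.fromRel (fun i _ => i = 0)

/-- The graph `X_n`: two copies of `K_{n+1}` (on `u_0,…,u_n` and `v_0,…,v_n`)
joined by the matching edges `u_i v_i` for `i ≠ 0`. -/
def Xgraph (n : ℕ) : SimpleGraph (Fin (n + 1) ⊕ Fin (n + 1)) :=
  SimpleGraph.fromRel (fun x y => match x, y with
    | .inl _, .inl _ => True
    | .inr _, .inr _ => True
    | .inl i, .inr j => i = j ∧ i ≠ 0
    | _, _ => False)

/-- The graph `X_n'`: `X_n` with `u_0` deleted.  Vertices `inl i` represent
`u_{i+1}` (`i : Fin n`) and `inr j` represent `v_j` (`j : Fin (n+1)`); each side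
induces a complete graph and `u_{i+1}` is matched to `v_{i+1}`. -/
def Xgraph' (n : ℕ) : SimpleGraph (Fin n ⊕ Fin (n + 1)) :=
  SimpleGraph.fromRel (fun x y => match x, y with
    | .inl _, .inl _ => True
    | .inr _, .inr _ => True
    | .inl i, .inr j => (j : ℕ) = (i : ℕ) + 1
    | _, _ => False)

lemma maxIndep_dom {G : SimpleGraph V} {I : Set V} (hI : IsMaxIndep G I)
    {v : V} (hv : v ∉ I) : ∃ u ∈ I, G.Adj u v := by
  by_contra h
  push_neg at h
  have hind : IsIndep G (insert v I) := by
    rintro a (rfl | ha) b (rfl | hb)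
    · exact G.irrefl
    · intro hab; exact h b hb (hab.symm)
    · exact h a ha
    · exact hI.1 a ha b hb
  have := hI.2 _ hind (Set.subset_insert v I)
  exact hv (this ▸ Set.mem_insert v I)

lemma domSet_mono {G : SimpleGraph V} {D₀ D₁ : Set V} (h : D₀ ⊆ D₁)
    (hD : IsDomSet G D₀) : IsDomSet G D₁ := fun v hv => by
  obtain ⟨u, hu, hadj⟩ := hD v (fun hv0 => hv (h hv0))
  exact ⟨u, h hu, hadj⟩

lemma exists_minDomSet [Finite V] (G : SimpleGraph V) : ∃ D, IsMinDomSet G D := by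
  have hne : {n | ∃ D : Set V, IsDomSet G D ∧ D.ncard = n}.Nonempty :=
    ⟨(Set.univ : Set V).ncard, Set.univ, fun v hv => absurd (Set.mem_univ v) hv, rfl⟩
  obtain ⟨D, hD, hcard⟩ := Nat.sInf_mem hne
  refine ⟨D, hD, fun D' hsub hdom => ?_⟩
  have h1 : D'.ncard < D.ncard := Set.ncard_lt_ncard hsub (Set.toFinite D)
  have h2 : sInf {n | ∃ D : Set V, IsDomSet G D ∧ D.ncard = n} ≤ D'.ncard :=
    Nat.sInf_le ⟨D', hdom, rfl⟩
  omega

lemma ncard_prod (s : Set V) (t : Set W) : (s ×ˢ t).ncard = s.ncard * t.ncard := by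
  rw [← Nat.card_coe_set_eq, ← Nat.card_coe_set_eq, ← Nat.card_coe_set_eq,
    ← Nat.card_prod]
  exact Nat.card_congr (Equiv.Set.prod s t)

theorem stmt_8 [Fintype V] [Fintype W] (G : SimpleGraph V) (H : SimpleGraph W)
    (IG : Set V) (IH : Set W) (hIG : IsMaxIndep G IG) (hIH : IsMaxIndep H IH) :
    upperDom (G.boxProd H) ≥
      IG.ncard * IH.ncard +
        upperDom ((SimpleGraph.induce IGᶜ G).boxProd (SimpleGraph.induce IHᶜ H)) := by
  set GH' := (SimpleGraph.induce IGᶜ G).boxProd (SimpleGraph.induce IHᶜ H) with hGH'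
  have hbdd : BddAbove {n | ∃ D : Set (↥IGᶜ × ↥IHᶜ), IsMinDomSet GH' D ∧ D.ncard = n} := by
    refine ⟨Nat.card (↥IGᶜ × ↥IHᶜ), fun n hn => ?_⟩
    obtain ⟨D, _, rfl⟩ := hn
    rw [← Set.ncard_univ]
    exact Set.ncard_le_ncard (Set.subset_univ D) Set.finite_univ
  have hne : {n | ∃ D : Set (↥IGᶜ × ↥IHᶜ), IsMinDomSet GH' D ∧ D.ncard = n}.Nonempty := by
    obtain ⟨D, hD⟩ := exists_minDomSet GH'
    exact ⟨D.ncard, D, hD, rfl⟩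
  obtain ⟨D'', hD''min, hD''card⟩ : ∃ D : Set (↥IGᶜ × ↥IHᶜ), IsMinDomSet GH' D ∧
      D.ncard = upperDom GH' := Nat.sSup_mem hne hbdd
  set e : (↥IGᶜ × ↥IHᶜ) → V × W := fun p => (p.1.1, p.2.1) with he
  have he_inj : Function.Injective e := by
    rintro ⟨⟨a, ha⟩, ⟨b, hb⟩⟩ ⟨⟨c, hc⟩, ⟨d, hd⟩⟩ h
    simp only [he, Prod.mk.injEq] at h
    simp [Prod.ext_iff, Subtype.ext_iff, h.1, h.2]
  have hadj_e : ∀ p q : ↥IGᶜ × ↥IHᶜ, GH'.Adj p q ↔ (G.boxProd H).Adj (e p) (e q) := by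
    rintro ⟨⟨a, ha⟩, ⟨b, hb⟩⟩ ⟨⟨c, hc⟩, ⟨d, hd⟩⟩
    simp [hGH', boxProd_adj, he, Subtype.ext_iff, comap_adj]
  set D : Set (V × W) := (IG ×ˢ IH) ∪ (e '' D'') with hD
  have hmemIm : ∀ x ∈ e '' D'', x.1 ∉ IG ∧ x.2 ∉ IH := by
    rintro x ⟨⟨⟨a, ha⟩, ⟨b, hb⟩⟩, _, rfl⟩
    exact ⟨ha, hb⟩
  have hdisj : Disjoint (IG ×ˢ IH) (e '' D'') := by
    rw [Set.disjoint_left]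
    rintro x hx hx'
    exact (hmemIm x hx').1 hx.1
  have hcard : D.ncard = IG.ncard * IH.ncard + upperDom GH' := by
    rw [hD, Set.ncard_union_eq hdisj (Set.toFinite _) (Set.toFinite _), ncard_prod,
      Set.ncard_image_of_injective _ he_inj, hD''card]
  have hdom : IsDomSet (G.boxProd H) D := by
    rintro ⟨v, w⟩ hvw
    by_cases hv : v ∈ IG <;> by_cases hw : w ∈ IH
    · exact absurd (Set.mem_union_left _ (Set.mk_mem_prod hv hw)) hvw
    · obtain ⟨w', hw', hadj⟩ := maxIndep_dom hIH hw
      refine ⟨(v, w'), Set.mem_union_left _ (Set.mk_mem_prod hv hw'), ?_⟩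
      exact boxProd_adj.mpr (Or.inr ⟨hadj, rfl⟩)
    · obtain ⟨v', hv', hadj⟩ := maxIndep_dom hIG hv
      refine ⟨(v', w), Set.mem_union_left _ (Set.mk_mem_prod hv' hw), ?_⟩
      exact boxProd_adj.mpr (Or.inl ⟨hadj, rfl⟩)
    · set p : ↥IGᶜ × ↥IHᶜ := (⟨v, hv⟩, ⟨w, hw⟩) with hp
      by_cases hpD : p ∈ D''
      · exact absurd (Set.mem_union_right _ (Set.mem_image_of_mem e hpD)) hvw
      · obtain ⟨u, hu, hadj⟩ := hD''min.1 p hpD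
        refine ⟨e u, ?_, (hadj_e u p).1 hadj⟩
        exact Set.mem_union_right _ (Set.mem_image_of_mem e hu)
  have hkey : ∀ x ∈ D, ¬ IsDomSet (G.boxProd H) (D \ {x}) := by
    rintro x hx
    rcases hx with hx | hx
    · intro hdom'
      obtain ⟨u, hu, hadj⟩ := hdom' x (by simp)
      rcases boxProd_adj.1 hadj with ⟨h1, h2⟩ | ⟨h1, h2⟩
      · rcases hu.1 with hu' | hu'
        · exact hIG.1 u.1 hu'.1 x.1 hx.1 h1
        · exact (hmemIm u hu').2 (h2 ▸ hx.2)
      · rcases hu.1 with hu' | hu'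
        · exact hIH.1 u.2 hu'.2 x.2 hx.2 h1
        · exact (hmemIm u hu').1 (h2 ▸ hx.1)
    · obtain ⟨x', hx', rfl⟩ := hx
      intro hdom'
      have hnd : ¬ IsDomSet GH' (D'' \ {x'}) :=
        hD''min.2 _ (Set.sdiff_singleton_ssubset.2 hx')
      apply hnd
      intro z hz
      have hez : e z ∉ D \ {e x'} := by
        rintro ⟨hmem, hne⟩
        rcases hmem with h | ⟨y, hy, hey⟩
        · exact z.1.2 h.1
        · cases he_inj hey
          exact hz ⟨hy, fun hzx => hne (congrArg e (Set.mem_singleton_iff.1 hzx))⟩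
      obtain ⟨u, hu, hadj⟩ := hdom' (e z) hez
      rcases hu.1 with hu' | ⟨u', hu'', rfl⟩
      · exfalso
        rcases boxProd_adj.1 hadj with ⟨h1, h2⟩ | ⟨h1, h2⟩
        · exact z.2.2 (show (e z).2 ∈ IH from h2 ▸ hu'.2)
        · exact z.1.2 (show (e z).1 ∈ IG from h2 ▸ hu'.1)
      · refine ⟨u', ⟨hu'', fun h => hu.2 ?_⟩, (hadj_e u' z).2 hadj⟩
        exact congrArg e (Set.mem_singleton_iff.1 h)
  have hmin : IsMinDomSet (G.boxProd H) D := by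
    refine ⟨hdom, fun D₀ hsub hdom₀ => ?_⟩
    obtain ⟨x, hxD, hxD₀⟩ := Set.exists_of_ssubset hsub
    refine hkey x hxD (domSet_mono ?_ hdom₀)
    exact fun y hy => ⟨hsub.1 hy,
      fun hyx => hxD₀ (by rwa [Set.mem_singleton_iff.1 hyx] at hy)⟩
  have hmem : IG.ncard * IH.ncard + upperDom GH' ∈
      {n | ∃ D : Set (V × W), IsMinDomSet (G.boxProd H) D ∧ D.ncard = n} :=
    ⟨D, hmin, hcard⟩
  have hbdd2 : BddAbove {n | ∃ D : Set (V × W), IsMinDomSet (G.boxProd H) D ∧ D.ncard = n} := by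
    refine ⟨Nat.card (V × W), fun n hn => ?_⟩
    obtain ⟨D₁, _, rfl⟩ := hn
    rw [← Set.ncard_univ]
    exact Set.ncard_le_ncard (Set.subset_univ D₁) Set.finite_univ
  exact le_csSup hbdd2 hmem
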